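/- Let A be a commutative ring, I ⊆ A an ideal, and f ∈ I a non-zerodivisor. Let A' = A[tI]/(1 - tf) be the quotient of the Rees algebra A[tI] = ⊕_{n≥0} t^n I^n by the principal ideal generated by 1 - tf. If I = (a_1, …, a_l), then A' is isomorphic to the subring A[a_1/f, …, a_l/f] of the localization A_f. -/

import Mathlib

open Polynomial

/-- If `(1 - C f * X) * q` lies in the Rees algebra of `I` and `f ∈ I`, then `q` does too. -/
lemma cofactor_mem {A : Type*} [CommRing A] {I : Ideal A} {f : A} (hfI : f ∈ I)
    {q : A[X]} (h : (1 - C f * X) * q ∈ reesAlgebra I) : q ∈ reesAlgebra I := by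
  rw [mem_reesAlgebra_iff] at h ⊢
  intro n
  induction n with
  | zero => simpa using Ideal.mem_top
  | succ n ih =>
    have hc : q.coeff (n + 1) =
        ((1 - C f * X) * q).coeff (n + 1) + f * q.coeff n := by
      simp [sub_mul, coeff_sub, mul_assoc, coeff_C_mul, coeff_X_mul]
    rw [hc]
    refine add_mem (h (n + 1)) ?_
    rw [pow_succ]
    exact mul_comm f (q.coeff n) ▸ Ideal.mul_mem_mul (ih) hfI

lemma dvd_of_aeval_invSelf_eq_zero {A : Type*} [CommRing A] (f : A) {p : A[X]}
    (hp : Polynomial.aeval (IsLocalization.Away.invSelf (S := Localization.Away f) f) p = 0) :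
    (C f * X - 1) ∣ p := by
  rw [← AdjoinRoot.mk_eq_zero]
  apply (Localization.awayEquivAdjoin f).symm.injective
  rw [map_zero]
  show AdjoinRoot.liftAlgHom (C f * X - 1) (Algebra.ofId _ _) (IsLocalization.Away.invSelf f)
      (show aeval _ _ = _ by simp) (AdjoinRoot.mk _ p) = 0
  exact hp

theorem stmt_2 {A : Type*} [CommRing A] (I : Ideal A) (f : A)
    (hfI : f ∈ I) (hf : f ∈ nonZeroDivisors A)
    (l : ℕ) (a : Fin l → A) (hgen : I = Ideal.span (Set.range a)) :
    Nonempty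
      ((↥(reesAlgebra I) ⧸
          (Ideal.span {1 - (⟨Polynomial.monomial 1 f,
              (reesAlgebra.monomial_mem).mpr (by simpa using hfI)⟩ : ↥(reesAlgebra I))} :
            Ideal ↥(reesAlgebra I)))
        ≃ₐ[A]
       ↥(Algebra.adjoin A {x : Localization.Away f |
          ∃ i : Fin l, x * algebraMap A (Localization.Away f) f
            = algebraMap A (Localization.Away f) (a i)})) := by
  set L := Localization.Away f
  set v : L := IsLocalization.Away.invSelf f with hv
  have hmul : algebraMap A L f * v = 1 := IsLocalization.Away.mul_invSelf f
  set S : Set L := {x : L | ∃ i : Fin l,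
      x * algebraMap A L f = algebraMap A L (a i)} with hS
  set φ : ↥(reesAlgebra I) →ₐ[A] L :=
    (Polynomial.aeval v).comp (Subalgebra.val (reesAlgebra I)) with hφ
  set g : ↥(reesAlgebra I) := 1 - (⟨Polynomial.monomial 1 f,
      (reesAlgebra.monomial_mem).mpr (by simpa using hfI)⟩ : ↥(reesAlgebra I)) with hg
  -- membership of a i in I
  have hai : ∀ i, a i ∈ I := fun i => hgen ▸ Ideal.subset_span ⟨i, rfl⟩
  -- key fact about powers of I
  have hpow : ∀ n : ℕ, ∀ c ∈ I ^ n, algebraMap A L c * v ^ n ∈ Algebra.adjoin A S := by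
    intro n
    induction n with
    | zero => intro c _; simpa using Subalgebra.algebraMap_mem _ c
    | succ n ih =>
      intro c hc
      rw [pow_succ] at hc
      refine Submodule.mul_induction_on hc (fun x hx y hy => ?_) (fun x y hx hy => ?_)
      ·
        have h1 : algebraMap A L x * v ^ n ∈ Algebra.adjoin A S := ih x hx
        have h2 : algebraMap A L y * v ∈ Algebra.adjoin A S := by
          rw [hgen] at hy
          induction hy using Submodule.span_induction with
          | mem z hz =>
            obtain ⟨i, rfl⟩ := hz
            exact Algebra.subset_adjoin ⟨i, by rw [mul_assoc, mul_comm v, hmul, mul_one]⟩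
          | zero => rw [map_zero, zero_mul]; exact zero_mem _
          | add z w _ _ hz hw => rw [map_add, add_mul]; exact add_mem hz hw
          | smul r z _ hz =>
            rw [Algebra.smul_def, map_mul, mul_assoc]
            exact Subalgebra.mul_mem _ (Subalgebra.algebraMap_mem _ r) hz
        have : algebraMap A L (x * y) * v ^ (n + 1)
            = (algebraMap A L x * v ^ n) * (algebraMap A L y * v) := by
          rw [map_mul, pow_succ]; ring
        rw [this]
        exact Subalgebra.mul_mem _ h1 h2
      · rw [map_add, add_mul]; exact add_mem hx hy
  have hrange : φ.range = Algebra.adjoin A S := by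
    apply le_antisymm
    · rintro _ ⟨p, rfl⟩
      show Polynomial.aeval v ((p : Polynomial A)) ∈ Algebra.adjoin A S
      rw [Polynomial.aeval_eq_sum_range]
      refine Subalgebra.sum_mem _ fun i _ => ?_
      rw [Algebra.smul_def]
      exact hpow i _ ((mem_reesAlgebra_iff I _).mp p.2 i)
    · rw [Algebra.adjoin_le_iff]
      rintro x ⟨i, hx⟩
      have hxval : x = algebraMap A L (a i) * v := by
        have := congrArg (· * v) hx
        simpa [mul_assoc, hmul] using this
      refine ⟨⟨Polynomial.monomial 1 (a i),
        (reesAlgebra.monomial_mem).mpr (by simpa using hai i)⟩, ?_⟩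
      rw [hφ]
      simp [Polynomial.aeval_monomial, hxval]
  have hker : (Ideal.span {g} : Ideal ↥(reesAlgebra I)) = RingHom.ker φ := by
    apply le_antisymm
    · rw [Ideal.span_le, Set.singleton_subset_iff]
      rw [SetLike.mem_coe, RingHom.mem_ker, hφ]
      show Polynomial.aeval v ((g : Polynomial A)) = 0
      rw [hg]
      push_cast
      simp [Polynomial.aeval_monomial, hmul]
    · intro p hp
      rw [RingHom.mem_ker] at hp
      have hdvd : (Polynomial.C f * Polynomial.X - 1) ∣ (p : Polynomial A) :=
        dvd_of_aeval_invSelf_eq_zero f hp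
      obtain ⟨q, hq⟩ := hdvd
      have hmemq : -q ∈ reesAlgebra I := by
        apply cofactor_mem hfI
        have : (1 - Polynomial.C f * Polynomial.X) * (-q) = (p : Polynomial A) := by
          rw [hq]; ring
        rw [this]; exact p.2
      rw [Ideal.mem_span_singleton]
      refine ⟨⟨-q, hmemq⟩, ?_⟩
      apply Subtype.ext
      push_cast
      rw [hg]
      push_cast
      rw [hq, Polynomial.C_mul_X_eq_monomial.symm]
      ring
  exact ⟨(Ideal.quotientEquivAlgOfEq A hker).trans
    ((Ideal.quotientKerEquivRange φ).trans (Subalgebra.equivOfEq _ _ hrange))⟩
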